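/- Let G be a connected simple graph with vertex set V and edge set E, let L ⊆ E be the set of edges carrying a line power-flow measurement and P ⊆ V the set of buses carrying an injection measurement. Let S ⊆ V be nonempty and proper, let A ⊆ E be the set of edges with exactly one endpoint in S, and define the reduced measurement sets L' := L \ A and P' := P minus all vertices incident to an edge of A. Then there exists no spanning tree T of G together with an assignment for T with respect to (L', P'): that is, no injective function f on the edges of T such that every edge e ∈ T with e ∈ L' maps to the flow measurement on e itself, and every edge e ∈ T with e ∉ L' maps to the injection measurement at one of the two endpoints of e lying in P'. -/

import Mathlib

/-- Let `G` be a connected graph, `L` the edges carrying flow measurements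
and `P` the buses carrying injection measurements. Let `S` be a nonempty proper vertex
set, `A` the set of edges of `G` cut by `S`, and let `L' = L \ A`, `P' = P` minus the
vertices incident to an edge of `A` be the reduced measurement sets. Then no spanning
tree `T` of `G` admits an assignment with respect to `(L', P')`: an injective map `f` on
the edges of `T` such that every tree edge `e ∈ L'` maps to its own flow measurement
(`Sum.inl e`) and every tree edge `e ∉ L'` maps to the injection measurement
(`Sum.inr x`) at one of its endpoints `x` lying in `P'`. -/
theorem stmt10 {V : Type*} (G : SimpleGraph V) (hG : G.Connected)
    (L : Set (Sym2 V)) (hL : L ⊆ G.edgeSet) (P : Set V)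
    (S : Set V) (hS1 : S.Nonempty) (hS2 : S ≠ Set.univ) :
    let A : Set (Sym2 V) :=
      {e | e ∈ G.edgeSet ∧ ∃ u v : V, e = s(u, v) ∧
        ((u ∈ S ∧ v ∉ S) ∨ (u ∉ S ∧ v ∈ S))}
    let L' : Set (Sym2 V) := L \ A
    let P' : Set V := P \ {x | ∃ e ∈ A, x ∈ e}
    ¬ ∃ (T : SimpleGraph V) (f : Sym2 V → Sym2 V ⊕ V),
        T ≤ G ∧ T.IsTree ∧ Set.InjOn f T.edgeSet ∧
        ∀ e ∈ T.edgeSet,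
          (e ∈ L' → f e = Sum.inl e) ∧
          (e ∉ L' → ∃ x : V, x ∈ e ∧ x ∈ P' ∧ f e = Sum.inr x) := by
  intro A L' P'
  rintro ⟨T, f, hTG, hTree, hinj, hf⟩
  obtain ⟨u, hu⟩ := hS1
  have : ∃ v, v ∉ S := by
    by_contra h
    push_neg at h
    exact hS2 (Set.eq_univ_of_forall h)
  obtain ⟨v, hv⟩ := this
  obtain ⟨w⟩ := (hTree.isConnected u v)
  obtain ⟨d, hd, hd1, hd2⟩ := w.exists_boundary_dart S hu hv
  have heT : d.edge ∈ T.edgeSet := w.edges_subset_edgeSet (by rw [SimpleGraph.Walk.edges]; exact List.mem_map_of_mem hd)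
  have heA : d.edge ∈ A := by
    refine ⟨SimpleGraph.edgeSet_mono hTG heT, d.fst, d.snd, rfl, Or.inl ⟨hd1, hd2⟩⟩
  have heL : d.edge ∉ L' := fun h => h.2 heA
  obtain ⟨x, hxe, hxP, -⟩ := (hf d.edge heT).2 heL
  exact hxP.2 ⟨d.edge, heA, hxe⟩
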